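/- Let C be an m×n diagram with its white squares labelled 1,…,k in reading order. Then Pfaffian(C) = Σ sgn(V,H), where the sum runs over all decompositions (V,H) of C with excess(H) = (0,0,…,0) in (ℤ/2ℤ)^m. -/

import Mathlib

open Finset

/-- An `m × n` diagram: each square is black or white (`true` = white).
`D i j` is the colour of the square in row `i`, column `j`. -/
abbrev Diagram (m n : ℕ) := Fin m → Fin n → Bool

/-- The finite set of white squares of a diagram. -/
def whites {m n : ℕ} (D : Diagram m n) : Finset (Fin m × Fin n) :=
  Finset.univ.filter fun p => D p.1 p.2 = true

/-- Reading order (strict): row-by-row from top to bottom, left to right in each row. -/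
def rlt {m n : ℕ} (p q : Fin m × Fin n) : Prop :=
  p.1 < q.1 ∨ (p.1 = q.1 ∧ p.2 < q.2)

instance {m n : ℕ} : DecidableRel (@rlt m n) := fun _ _ => by unfold rlt; infer_instance

/-- The label (position in reading order over the whole grid) of a square. -/
def idx {m n : ℕ} (p : Fin m × Fin n) : ℕ := p.1.val * n + p.2.val

/-- Lexicographic (reading) order on ordered pairs of squares, used to list the
edges of a matching canonically (edges of a matching have distinct left endpoints,
so this sorts them by smaller endpoint; the sign is independent of edge order). -/
def rleE {m n : ℕ} (e f : (Fin m × Fin n) × (Fin m × Fin n)) : Prop :=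
  rlt e.1 f.1 ∨ (e.1 = f.1 ∧ (rlt e.2 f.2 ∨ e.2 = f.2))

instance {m n : ℕ} : DecidableRel (@rleE m n) := fun _ _ => by unfold rleE; infer_instance

instance {m n : ℕ} : IsTrans ((Fin m × Fin n) × (Fin m × Fin n)) rleE := by
  constructor
  rintro ⟨⟨a1,a2⟩,⟨a3,a4⟩⟩ ⟨⟨b1,b2⟩,⟨b3,b4⟩⟩ ⟨⟨c1,c2⟩,⟨c3,c4⟩⟩ h1 h2
  simp only [rleE, rlt, Fin.lt_def, Prod.mk.injEq, Fin.ext_iff] at *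
  omega

instance {m n : ℕ} : IsAntisymm ((Fin m × Fin n) × (Fin m × Fin n)) rleE := by
  constructor
  rintro ⟨⟨a1,a2⟩,⟨a3,a4⟩⟩ ⟨⟨b1,b2⟩,⟨b3,b4⟩⟩ h1 h2
  simp only [rleE, rlt, Fin.lt_def, Prod.mk.injEq, Fin.ext_iff] at *
  omega

instance {m n : ℕ} : IsTotal ((Fin m × Fin n) × (Fin m × Fin n)) rleE := by
  constructor
  rintro ⟨⟨a1,a2⟩,⟨a3,a4⟩⟩ ⟨⟨b1,b2⟩,⟨b3,b4⟩⟩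
  simp only [rleE, rlt, Fin.lt_def, Prod.mk.injEq, Fin.ext_iff]
  omega

/-- Number of inversions of a list of naturals. -/
def inversions (l : List ℕ) : ℕ :=
  ((List.range l.length) ×ˢ (List.range l.length)).countP
    fun ab => ab.1 < ab.2 ∧ l.getD ab.2 0 < l.getD ab.1 0

/-- The sign of a perfect matching: list the edges `(i₁,j₁),…,(i_{m'},j_{m'})`
(each with `iₖ` before `jₖ` in reading order, edges sorted by smaller endpoint),
flatten to the sequence `i₁,j₁,i₂,j₂,…` of labels, and take `(−1)` to the number
of inversions of this sequence; this is the sign of the permutation sending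
`(1,…,2m')` to `(i₁,j₁,…,i_{m'},j_{m'})`. -/
def pmSign {m n : ℕ} (π : Finset ((Fin m × Fin n) × (Fin m × Fin n))) : ℤ :=
  (-1) ^ inversions ((π.sort rleE).flatMap fun e => [idx e.1, idx e.2])

/-- `π` is a perfect matching of the diagram `D`: a set of edges `(e₁, e₂)` with
`e₁` before `e₂` in reading order, the two endpoints in a common row or column,
and every white square of `D` belonging to exactly one edge. -/
def IsPM {m n : ℕ} (D : Diagram m n) (π : Finset ((Fin m × Fin n) × (Fin m × Fin n))) : Prop :=
  (∀ e ∈ π, rlt e.1 e.2 ∧ (e.1.1 = e.2.1 ∨ e.1.2 = e.2.2) ∧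
      e.1 ∈ whites D ∧ e.2 ∈ whites D) ∧
  ∀ p ∈ whites D, ∃! e, e ∈ π ∧ (p = e.1 ∨ p = e.2)

open Classical in
/-- The Pfaffian of a diagram: the sum of the signs of all its perfect matchings. -/
noncomputable def Pfaffian {m n : ℕ} (D : Diagram m n) : ℤ :=
  ∑ π ∈ Finset.univ.filter (fun π => IsPM D π), pmSign π

/-- The excess of a set `S` of squares: the vector in `(ℤ/2ℤ)^m` whose `i`-th
coordinate is the number of elements of `S` in row `i`, reduced mod 2. -/
def excess {m n : ℕ} (S : Finset (Fin m × Fin n)) : Fin m → ZMod 2 :=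
  fun i => ((S.filter fun p => p.1 = i).card : ZMod 2)

/-- `(V, H)` is a decomposition of the diagram `D`: `V` and `H` are disjoint,
their union is the set of white squares of `D`, and every column of `D` contains
an even number of elements of `V`. -/
def IsDecomp {m n : ℕ} (D : Diagram m n) (V H : Finset (Fin m × Fin n)) : Prop :=
  Disjoint V H ∧ V ∪ H = whites D ∧
    ∀ j : Fin n, Even ((V.filter fun p => p.2 = j).card)

/-- `inv(V)`: the number of pairs `(p, q) ∈ V × V` with `p` before `q` in reading
order (i.e. with smaller label) and `q` strictly below and strictly to the left
of `p`. -/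
def invV {m n : ℕ} (V : Finset (Fin m × Fin n)) : ℕ :=
  ((V ×ˢ V).filter fun pq =>
    rlt pq.1 pq.2 ∧ pq.1.1 < pq.2.1 ∧ pq.2.2 < pq.1.2).card

/-- `inv(V|H)`: the number of pairs `(p, q)` with `p ∈ H`, `q ∈ V` and `p` before
`q` in reading order (i.e. with smaller label). -/
def invMix {m n : ℕ} (V H : Finset (Fin m × Fin n)) : ℕ :=
  ((H ×ˢ V).filter fun pq => rlt pq.1 pq.2).card

/-- The signature `sgn(V,H) = (−1)^{inv(V) + inv(V|H)}` of a decomposition. -/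
def sgnVH {m n : ℕ} (V H : Finset (Fin m × Fin n)) : ℤ :=
  (-1) ^ (invV V + invMix V H)


/-! ### Auxiliary machinery -/

section Aux

variable {m n : ℕ}

lemma rlt_iff_idx {p q : Fin m × Fin n} : rlt p q ↔ idx p < idx q := by
  obtain ⟨⟨p1,hp1⟩,⟨p2,hp2⟩⟩ := p
  obtain ⟨⟨q1,hq1⟩,⟨q2,hq2⟩⟩ := q
  simp only [idx, rlt, Fin.lt_def, Fin.mk_lt_mk, Fin.mk.injEq, Prod.mk.injEq]
  constructor
  · rintro (h | ⟨h1, h2⟩)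
    · have e1 : (p1+1) * n ≤ q1 * n := Nat.mul_le_mul_right n h
      have e2 : (p1+1) * n = p1 * n + n := Nat.succ_mul _ _
      omega
    · subst h1; omega
  · intro h
    rcases lt_trichotomy p1 q1 with h1|h1|h1
    · exact Or.inl h1
    · subst h1; exact Or.inr ⟨rfl, by omega⟩
    · exfalso
      have e1 : (q1+1) * n ≤ p1 * n := Nat.mul_le_mul_right n h1
      have e2 : (q1+1) * n = q1 * n + n := Nat.succ_mul _ _
      omega

lemma rlt_trichotomy (p q : Fin m × Fin n) : rlt p q ∨ p = q ∨ rlt q p := by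
  obtain ⟨⟨p1,hp1⟩,⟨p2,hp2⟩⟩ := p
  obtain ⟨⟨q1,hq1⟩,⟨q2,hq2⟩⟩ := q
  simp only [rlt, Fin.lt_def, Fin.mk_lt_mk, Fin.mk.injEq, Prod.mk.injEq]
  omega

lemma rlt_irrefl (p : Fin m × Fin n) : ¬ rlt p p := by
  simp [rlt, lt_irrefl]

lemma rlt_asymm {p q : Fin m × Fin n} (h : rlt p q) : ¬ rlt q p := by
  rw [rlt_iff_idx] at *; omega

lemma rlt_ne {p q : Fin m × Fin n} (h : rlt p q) : p ≠ q := by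
  rintro rfl; exact rlt_irrefl p h

lemma idx_inj {p q : Fin m × Fin n} (h : idx p = idx q) : p = q := by
  rcases rlt_trichotomy p q with h1 | h1 | h1
  · rw [rlt_iff_idx] at h1; omega
  · exact h1
  · rw [rlt_iff_idx] at h1; omega

/-! ### Inversions recursion -/

lemma list_countP_product {α β : Type*} (l1 : List α) (l2 : List β) (p : α × β → Bool) :
    (l1 ×ˢ l2).countP p = (l1.map (fun a => l2.countP (fun b => p (a,b)))).sum := by
  induction l1 with
  | nil => rfl
  | cons a l ih =>
    rw [List.product_cons, List.countP_append, List.countP_map, ih]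
    simp only [List.map_cons, List.sum_cons]
    rfl

lemma countP_range_getD (l : List ℕ) (p : ℕ → Bool) :
    (List.range l.length).countP (fun i => p (l.getD i 0)) = l.countP p := by
  induction l with
  | nil => rfl
  | cons a l ih =>
    rw [List.length_cons, List.range_succ_eq_map, List.countP_cons, List.countP_map,
      List.countP_cons]
    simp only [List.getD_cons_zero, List.getD_cons_succ, Function.comp_def]
    rw [ih]

lemma inversions_cons (x : ℕ) (l : List ℕ) :
    inversions (x :: l) = l.countP (fun y => y < x) + inversions l := by
  unfold inversions
  rw [list_countP_product, list_countP_product]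
  simp only [List.length_cons]
  rw [List.range_succ_eq_map]
  simp only [List.map_cons, List.map_map, List.sum_cons, Function.comp_def]
  have h0 : (0 :: List.map Nat.succ (List.range l.length)).countP
      (fun b => decide (0 < b ∧ (x :: l).getD b 0 < (x :: l).getD 0 0)) =
      l.countP (fun y => y < x) := by
    rw [List.countP_cons, List.countP_map]
    simp only [List.getD_cons_zero, List.getD_cons_succ, Function.comp_def,
      Nat.zero_lt_succ, true_and, lt_irrefl, false_and, decide_false]
    rw [countP_range_getD l (fun y => y < x)]
    simp
  have h1 : ∀ i : ℕ, (0 :: List.map Nat.succ (List.range l.length)).countP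
      (fun b => decide (i.succ < b ∧ (x :: l).getD b 0 < (x :: l).getD i.succ 0)) =
      (List.range l.length).countP (fun b => decide (i < b ∧ l.getD b 0 < l.getD i 0)) := by
    intro i
    rw [List.countP_cons, List.countP_map]
    simp only [List.getD_cons_succ, Function.comp_def]
    simp [Nat.succ_lt_succ_iff]
  rw [h0]
  congr 1
  apply congrArg List.sum
  apply List.map_congr_left
  exact fun i _ => h1 i

end Aux

/-! ### Matchings of a pair of square sets -/

/-- `π` is a matching whose vertical edges cover `V` and horizontal edges cover `H`. -/
def IsVH {m n : ℕ} (V H : Finset (Fin m × Fin n))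
    (π : Finset ((Fin m × Fin n) × (Fin m × Fin n))) : Prop :=
  (∀ e ∈ π, rlt e.1 e.2 ∧
      ((e.1.2 = e.2.2 ∧ e.1 ∈ V ∧ e.2 ∈ V) ∨ (e.1.1 = e.2.1 ∧ e.1 ∈ H ∧ e.2 ∈ H))) ∧
  ∀ p ∈ V ∪ H, ∃! e, e ∈ π ∧ (p = e.1 ∨ p = e.2)

section Aux2

variable {m n : ℕ}

lemma IsVH.endpts {V H : Finset (Fin m × Fin n)} {π} (h : IsVH V H π)
    {e} (he : e ∈ π) : e.1 ∈ V ∪ H ∧ e.2 ∈ V ∪ H := by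
  rcases (h.1 e he).2 with ⟨_, h1, h2⟩ | ⟨_, h1, h2⟩ <;>
    exact ⟨Finset.mem_union.mpr (by tauto), Finset.mem_union.mpr (by tauto)⟩

lemma IsVH.no_share {V H : Finset (Fin m × Fin n)} {π} (h : IsVH V H π)
    {e f} (he : e ∈ π) (hf : f ∈ π) {x} (hxe : x = e.1 ∨ x = e.2)
    (hxf : x = f.1 ∨ x = f.2) : e = f := by
  have hx : x ∈ V ∪ H := by
    rcases hxe with rfl | rfl
    exacts [(h.endpts he).1, (h.endpts he).2]
  obtain ⟨g, _, hg⟩ := h.2 x hx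
  rw [hg e ⟨he, hxe⟩, hg f ⟨hf, hxf⟩]

lemma pmSign_empty : pmSign (∅ : Finset ((Fin m × Fin n) × (Fin m × Fin n))) = 1 := by
  simp [pmSign]
  rfl

lemma sort_erase_cons {π : Finset ((Fin m × Fin n) × (Fin m × Fin n))} {e0}
    (he0 : e0 ∈ π) (hmin : ∀ f ∈ π, f ≠ e0 → rleE e0 f) :
    π.sort rleE = e0 :: (π.erase e0).sort rleE := by
  refine (fun hp h1 h2 => List.Perm.eq_of_pairwise' (r := rleE) h1 h2 hp) ?_ ?_ ?_
  · apply Multiset.coe_eq_coe.mp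
    rw [Finset.sort_eq, ← Multiset.cons_coe, Finset.sort_eq, Finset.erase_val]
    exact (Multiset.cons_erase he0).symm
  · exact Finset.pairwise_sort _ _
  · rw [List.pairwise_cons]
    refine ⟨fun b hb => ?_, Finset.pairwise_sort _ _⟩
    rw [Finset.mem_sort] at hb
    exact hmin b (Finset.mem_of_mem_erase hb) (Finset.ne_of_mem_erase hb)

lemma flatMap_countP (t : ℕ) (L : List ((Fin m × Fin n) × (Fin m × Fin n))) :
    ((L.flatMap fun e => [idx e.1, idx e.2]).countP fun y => y < t) =
    (L.map fun e =>
      ((if idx e.1 < t then 1 else 0) + (if idx e.2 < t then 1 else 0))).sum := by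
  induction L with
  | nil => rfl
  | cons e L ih =>
    rw [List.flatMap_cons, List.countP_append, ih]
    simp only [List.map_cons, List.sum_cons, List.countP_cons, List.countP_nil]
    by_cases h1 : idx e.1 < t <;> by_cases h2 : idx e.2 < t <;> simp [h1, h2]

lemma sum_sort_map {β : Type*} [AddCommMonoid β]
    (π : Finset ((Fin m × Fin n) × (Fin m × Fin n)))
    (f : (Fin m × Fin n) × (Fin m × Fin n) → β) :
    ((π.sort rleE).map f).sum = ∑ e ∈ π, f e := by
  have h1 : ((π.sort rleE).map f : Multiset β).sum = Multiset.sum (π.val.map f) := by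
    rw [← Multiset.map_coe, Finset.sort_eq]
  simpa using h1

lemma countP_flatten {V H : Finset (Fin m × Fin n)} {π} (h : IsVH V H π) (t : ℕ) :
    (((π.sort rleE).flatMap fun e => [idx e.1, idx e.2]).countP fun y => y < t) =
    ((V ∪ H).filter fun x => idx x < t).card := by
  rw [flatMap_countP, sum_sort_map]
  have hcover : (V ∪ H).filter (fun x => idx x < t) =
      π.biUnion (fun e => ({e.1, e.2} : Finset _).filter (fun x => idx x < t)) := by
    ext x
    simp only [Finset.mem_filter, Finset.mem_biUnion, Finset.mem_insert,
      Finset.mem_singleton]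
    constructor
    · rintro ⟨hx, hxt⟩
      obtain ⟨e, ⟨he, hxe⟩, _⟩ := h.2 x hx
      exact ⟨e, he, ⟨by tauto, hxt⟩⟩
    · rintro ⟨e, he, hxe, hxt⟩
      refine ⟨?_, hxt⟩
      rcases hxe with rfl | rfl
      exacts [(h.endpts he).1, (h.endpts he).2]
  rw [hcover, Finset.card_biUnion]
  · apply Finset.sum_congr rfl
    intro e he
    have hne : e.1 ≠ e.2 := rlt_ne (h.1 e he).1
    rw [Finset.card_filter, Finset.sum_pair hne]
  · intro e he f hf hef
    simp only [Finset.disjoint_left, Finset.mem_filter, Finset.mem_insert,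
      Finset.mem_singleton]
    rintro x ⟨hxe, -⟩ ⟨hxf, -⟩
    exact hef (h.no_share he hf (by tauto) (by tauto))

lemma pmSign_erase {π : Finset ((Fin m × Fin n) × (Fin m × Fin n))} {e0}
    (he0 : e0 ∈ π) (hrlt : rlt e0.1 e0.2)
    (hmin : ∀ f ∈ π, f ≠ e0 → rlt e0.1 f.1 ∧ rlt e0.1 f.2) :
    pmSign π = (-1) ^ ((((π.erase e0).sort rleE).flatMap fun e => [idx e.1, idx e.2]).countP
      fun y => y < idx e0.2) * pmSign (π.erase e0) := by
  have hsort := sort_erase_cons he0 (fun f hf hne => Or.inl (hmin f hf hne).1)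
  unfold pmSign
  rw [hsort, List.flatMap_cons]
  have hform : ([idx e0.1, idx e0.2] ++
      ((π.erase e0).sort rleE).flatMap fun e => [idx e.1, idx e.2]) =
      idx e0.1 :: idx e0.2 ::
        (((π.erase e0).sort rleE).flatMap fun e => [idx e.1, idx e.2]) := rfl
  rw [hform, inversions_cons, inversions_cons, List.countP_cons]
  have hz1 : ¬ (idx e0.2 < idx e0.1) := by
    have := rlt_iff_idx.mp hrlt; omega
  have hz2 : (((π.erase e0).sort rleE).flatMap fun e => [idx e.1, idx e.2]).countP
      (fun y => y < idx e0.1) = 0 := by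
    rw [List.countP_eq_zero]
    intro a ha
    rw [List.mem_flatMap] at ha
    obtain ⟨f, hf, haf⟩ := ha
    rw [Finset.mem_sort] at hf
    have hf1 : f ∈ π := Finset.mem_of_mem_erase hf
    have hf2 : f ≠ e0 := Finset.ne_of_mem_erase hf
    obtain ⟨h1, h2⟩ := hmin f hf1 hf2
    rw [rlt_iff_idx] at h1 h2
    simp only [List.mem_cons, List.mem_singleton, List.not_mem_nil, or_false] at haf
    rcases haf with rfl | rfl <;> simp <;> omega
  rw [hz2]
  simp [hz1, pow_add]

end Aux2

section Aux3

variable {m n : ℕ}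

lemma alt_sum_two_mul (k : ℕ) : ∑ i ∈ Finset.range (2*k), (-1 : ℤ) ^ (i + 1) = 0 := by
  induction k with
  | zero => simp
  | succ k ih =>
    have h2 : 2*(k+1) = 2*k + 1 + 1 := by ring
    rw [h2, Finset.sum_range_succ, Finset.sum_range_succ, ih]
    have h3 : (-1 : ℤ)^(2*k+1+1) = -((-1)^(2*k+1)) := by rw [pow_succ]; ring
    rw [h3]; ring

lemma alt_sum_even {c : ℕ} (hc : Even c) :
    ∑ i ∈ Finset.range c, (-1 : ℤ) ^ (i + 1) = 0 := by
  obtain ⟨k, hk⟩ := hc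
  have : c = 2*k := by omega
  rw [this]; exact alt_sum_two_mul k

lemma rank_sum_nat : ∀ (N : ℕ) (S : Finset ℕ) (f : ℕ → ℤ), S.card = N →
    (∑ x ∈ S, f ((S.filter (fun y => y < x)).card)) = ∑ i ∈ Finset.range N, f i := by
  intro N
  induction N with
  | zero =>
    intro S f h
    rw [Finset.card_eq_zero] at h
    subst h; simp
  | succ N ih =>
    intro S f h
    have hne : S.Nonempty := by rw [← Finset.card_pos, h]; omega
    set M := S.max' hne with hM
    have hMmem : M ∈ S := S.max'_mem hne
    have hle : ∀ x ∈ S, x ≤ M := fun x hx => S.le_max' x hx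
    have hcard : (S.erase M).card = N := by rw [Finset.card_erase_of_mem hMmem, h]; omega
    have key1 : ∀ x ∈ S.erase M, (S.filter (fun y => y < x)).card =
        ((S.erase M).filter (fun y => y < x)).card := by
      intro x hx
      congr 1
      ext y
      simp only [Finset.mem_filter, Finset.mem_erase]
      constructor
      · rintro ⟨hy, hyx⟩
        have := hle x (Finset.mem_of_mem_erase hx)
        exact ⟨⟨by omega, hy⟩, hyx⟩
      · tauto
    have key2 : (S.filter (fun y => y < M)).card = N := by
      have he : S.filter (fun y => y < M) = S.erase M := by
        ext y
        simp only [Finset.mem_filter, Finset.mem_erase]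
        constructor
        · rintro ⟨hy, hyM⟩; exact ⟨by omega, hy⟩
        · rintro ⟨hyne, hy⟩; exact ⟨hy, lt_of_le_of_ne (hle y hy) hyne⟩
      rw [he, hcard]
    rw [← Finset.add_sum_erase S _ hMmem, key2, Finset.sum_range_succ]
    have hcong : (∑ x ∈ S.erase M, f ((S.filter (fun y => y < x)).card)) =
        ∑ x ∈ S.erase M, f (((S.erase M).filter (fun y => y < x)).card) :=
      Finset.sum_congr rfl (fun x hx => by rw [key1 x hx])
    rw [hcong, ih (S.erase M) f hcard]
    ring

lemma rank_sum_sq (S : Finset (Fin m × Fin n)) (f : ℕ → ℤ) :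
    (∑ x ∈ S, f ((S.filter (fun y => rlt y x)).card)) =
    ∑ i ∈ Finset.range S.card, f i := by
  have hinj : ∀ x ∈ S, ∀ y ∈ S, idx x = idx y → x = y := fun x _ y _ h => idx_inj h
  have himg : ∀ x ∈ S, ((S.filter (fun y => rlt y x)).card) =
      ((S.image idx).filter (fun y => y < idx x)).card := by
    intro x hx
    rw [← Finset.card_image_of_injOn (s := S.filter (fun y => rlt y x))
      (fun a _ b _ hab => idx_inj hab)]
    congr 1
    ext t
    simp only [Finset.mem_image, Finset.mem_filter]
    constructor
    · rintro ⟨a, ⟨ha, hra⟩, rfl⟩; exact ⟨⟨a, ha, rfl⟩, rlt_iff_idx.mp hra⟩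
    · rintro ⟨⟨a, ha, rfl⟩, hlt⟩; exact ⟨a, ⟨ha, rlt_iff_idx.mpr hlt⟩, rfl⟩
  calc ∑ x ∈ S, f ((S.filter (fun y => rlt y x)).card)
      = ∑ x ∈ S, f (((S.image idx).filter (fun y => y < idx x)).card) :=
        Finset.sum_congr rfl (fun x hx => by rw [himg x hx])
    _ = ∑ t ∈ S.image idx, f (((S.image idx).filter (fun y => y < t)).card) :=
        (Finset.sum_image (g := idx) (s := S)
          (f := fun t => f (((S.image idx).filter (fun y => y < t)).card))
          (fun x hx y hy h => hinj x hx y hy h)).symm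
    _ = ∑ i ∈ Finset.range (S.image idx).card, f i := rank_sum_nat _ _ _ rfl
    _ = _ := by rw [Finset.card_image_of_injOn (fun a _ b _ hab => idx_inj hab)]

lemma rank_alt_sum {S : Finset (Fin m × Fin n)} {p} (hp : p ∈ S)
    (hmin : ∀ x ∈ S, x ≠ p → rlt p x) (heven : Even S.card) :
    ∑ q ∈ S.erase p, (-1 : ℤ) ^ ((S.filter (fun y => rlt y q)).card + 1) = 1 := by
  have h0 : (S.filter (fun y => rlt y p)).card = 0 := by
    rw [Finset.card_eq_zero, Finset.filter_eq_empty_iff]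
    intro x hx hrx
    exact rlt_asymm (hmin x hx (rlt_ne hrx)) hrx
  have hsum := rank_sum_sq S (fun i => (-1 : ℤ) ^ (i+1))
  rw [alt_sum_even heven, ← Finset.add_sum_erase S _ hp, h0] at hsum
  simp only [zero_add, pow_one] at hsum
  linarith

lemma neg_one_pow_congr_zmod {a b : ℕ} (h : (a : ZMod 2) = (b : ZMod 2)) :
    (-1 : ℤ) ^ a = (-1 : ℤ) ^ b := by
  have h2 := (ZMod.natCast_eq_natCast_iff' a b 2).mp h
  rw [neg_one_pow_eq_pow_mod_two, h2, ← neg_one_pow_eq_pow_mod_two]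

lemma even_iff_cast_zero (k : ℕ) : Even k ↔ ((k : ZMod 2) = 0) := by
  rw [ZMod.natCast_eq_zero_iff]
  exact even_iff_two_dvd

lemma card_filter_cast {α : Type*} (s : Finset α) (p : α → Prop) [DecidablePred p] :
    (((s.filter p).card : ℕ) : ZMod 2) = ∑ x ∈ s, (if p x then (1 : ZMod 2) else 0) := by
  rw [Finset.card_filter, Nat.cast_sum]
  apply Finset.sum_congr rfl
  intro x _
  split_ifs <;> simp

lemma sum_erase2 {α M : Type*} [DecidableEq α] [AddCommMonoid M] {s : Finset α} {p q : α}
    (hp : p ∈ s) (hq : q ∈ s) (hne : p ≠ q) (f : α → M) :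
    ∑ x ∈ s, f x = f p + f q + ∑ x ∈ (s.erase p).erase q, f x := by
  rw [← Finset.add_sum_erase s f hp,
    ← Finset.add_sum_erase (s.erase p) f (Finset.mem_erase.mpr ⟨hne.symm, hq⟩), add_assoc]

end Aux3




open Classical in
/-- Sum of signs of all matchings with vertical part covering `V`, horizontal part `H`. -/
noncomputable def Gsum {m n : ℕ} (V H : Finset (Fin m × Fin n)) : ℤ :=
  ∑ π ∈ Finset.univ.filter (fun π => IsVH V H π), pmSign π

section Expand

variable {m n : ℕ}

lemma partner_eq {V H : Finset (Fin m × Fin n)} {π} (h : IsVH V H π) {p}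
    (hp : p ∈ V ∪ H) (hmin : ∀ x ∈ V ∪ H, x ≠ p → rlt p x) :
    ∃ q, (p, q) ∈ π := by
  obtain ⟨e, ⟨he, hpe⟩, -⟩ := h.2 p hp
  rcases hpe with hpe | hpe
  · refine ⟨e.2, ?_⟩
    have heq : (p, e.2) = e := by rw [hpe]
    rw [heq]; exact he
  · exfalso
    have h1 : rlt e.1 e.2 := (h.1 e he).1
    have h2 : e.1 ∈ V ∪ H := (h.endpts he).1
    have h3 : e.1 ≠ p := by rw [hpe]; exact rlt_ne h1
    have h4 := hmin e.1 h2 h3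
    rw [hpe] at h4
    exact rlt_asymm h1 h4

open Classical in
lemma Gsum_expand_H {V H : Finset (Fin m × Fin n)} {p : Fin m × Fin n}
    (hdisj : Disjoint V H) (hpH : p ∈ H)
    (hmin : ∀ x ∈ V ∪ H, x ≠ p → rlt p x) :
    Gsum V H = ∑ q ∈ (H.filter (fun y => y.1 = p.1)).erase p,
      (-1 : ℤ) ^ (((V ∪ ((H.erase p).erase q)).filter (fun x => idx x < idx q)).card)
        * Gsum V ((H.erase p).erase q) := by
  have hpV : p ∉ V := Finset.disjoint_right.mp hdisj hpH
  have hpU : p ∈ V ∪ H := Finset.mem_union_right _ hpH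
  have hpart : (Finset.univ.filter (fun π => IsVH V H π)) =
      ((H.filter (fun y => y.1 = p.1)).erase p).biUnion
        (fun q => Finset.univ.filter (fun π => IsVH V H π ∧ (p, q) ∈ π)) := by
    ext π
    simp only [Finset.mem_filter, Finset.mem_biUnion, Finset.mem_univ, true_and]
    constructor
    · intro hπ
      obtain ⟨q, hq⟩ := partner_eq hπ hpU hmin
      have hty := hπ.1 _ hq
      have hqH : q ∈ H ∧ q.1 = p.1 := by
        rcases hty.2 with ⟨hc, h1, h2⟩ | ⟨hr, h1, h2⟩
        · exact absurd h1 hpV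
        · exact ⟨h2, hr.symm⟩
      exact ⟨q, Finset.mem_erase.mpr ⟨(rlt_ne hty.1).symm, Finset.mem_filter.mpr hqH⟩, hπ, hq⟩
    · rintro ⟨q, -, hπ, -⟩
      exact hπ
  rw [Gsum, hpart, Finset.sum_biUnion]
  swap
  · intro q1 hq1 q2 hq2 hne
    rw [Function.onFun, Finset.disjoint_left]
    rintro π hm1 hm2
    simp only [Finset.mem_filter, Finset.mem_univ, true_and] at hm1 hm2
    have heq := hm1.1.no_share hm1.2 hm2.2 (x := p) (Or.inl rfl) (Or.inl rfl)
    exact hne (congrArg Prod.snd heq)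
  apply Finset.sum_congr rfl
  intro q hqR
  obtain ⟨hqne, hqf⟩ := Finset.mem_erase.mp hqR
  obtain ⟨hqH, hqrow⟩ := Finset.mem_filter.mp hqf
  have hqV : q ∉ V := Finset.disjoint_right.mp hdisj hqH
  have hqU : q ∈ V ∪ H := Finset.mem_union_right _ hqH
  have hrpq : rlt p q := hmin q hqU hqne
  set H' := (H.erase p).erase q with hH'
  have hVH' : ∀ x, x ∈ V ∪ H' ↔ (x ∈ V ∪ H ∧ x ≠ p ∧ x ≠ q) := by
    intro x
    simp only [Finset.mem_union, Finset.mem_erase, hH']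
    constructor
    · rintro (hx | ⟨hxq, hxp, hx⟩)
      · refine ⟨Or.inl hx, ?_, ?_⟩ <;> rintro rfl
        exacts [hpV hx, hqV hx]
      · exact ⟨Or.inr hx, hxp, hxq⟩
    · rintro ⟨hx | hx, hxp, hxq⟩
      · exact Or.inl hx
      · exact Or.inr ⟨hxq, hxp, hx⟩
  have key_erase : ∀ π, IsVH V H π → (p, q) ∈ π → IsVH V H' (π.erase (p, q)) := by
    intro π hπ hpq
    constructor
    · intro e he
      have heπ : e ∈ π := Finset.mem_of_mem_erase he
      have hne : e ≠ (p, q) := Finset.ne_of_mem_erase he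
      have hty := hπ.1 e heπ
      have h1a : e.1 ≠ p := fun hx => hne (hπ.no_share heπ hpq (Or.inl rfl) (Or.inl hx))
      have h1b : e.2 ≠ p := fun hx => hne (hπ.no_share heπ hpq (Or.inr rfl) (Or.inl hx))
      have h1c : e.1 ≠ q := fun hx => hne (hπ.no_share heπ hpq (Or.inl rfl) (Or.inr hx))
      have h1d : e.2 ≠ q := fun hx => hne (hπ.no_share heπ hpq (Or.inr rfl) (Or.inr hx))
      refine ⟨hty.1, ?_⟩
      rcases hty.2 with hVv | ⟨hr, hH1, hH2⟩
      · exact Or.inl hVv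
      · exact Or.inr ⟨hr, Finset.mem_erase.mpr ⟨h1c, Finset.mem_erase.mpr ⟨h1a, hH1⟩⟩,
          Finset.mem_erase.mpr ⟨h1d, Finset.mem_erase.mpr ⟨h1b, hH2⟩⟩⟩
    · intro x hx
      obtain ⟨hxU, hxp, hxq⟩ := (hVH' x).mp hx
      obtain ⟨e, ⟨he, hxe⟩, huniq⟩ := hπ.2 x hxU
      have hepq : e ≠ (p, q) := by
        rintro rfl
        rcases hxe with h | h
        exacts [hxp h, hxq h]
      exact ⟨e, ⟨Finset.mem_erase.mpr ⟨hepq, he⟩, hxe⟩,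
        fun f hf => huniq f ⟨Finset.mem_of_mem_erase hf.1, hf.2⟩⟩
  have key_insert : ∀ π', IsVH V H' π' → IsVH V H (insert (p, q) π') ∧ (p, q) ∉ π' := by
    intro π' hπ'
    have hnot : (p, q) ∉ π' := by
      intro hmem
      have h5 := (hπ'.endpts hmem).1
      rw [hVH' p] at h5
      exact h5.2.1 rfl
    refine ⟨⟨?_, ?_⟩, hnot⟩
    · intro e he
      rcases Finset.mem_insert.mp he with rfl | he'
      · exact ⟨hrpq, Or.inr ⟨hqrow.symm, hpH, hqH⟩⟩
      · have hty := hπ'.1 e he'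
        refine ⟨hty.1, ?_⟩
        rcases hty.2 with hVv | ⟨hr, h1, h2⟩
        · exact Or.inl hVv
        · exact Or.inr ⟨hr, Finset.mem_of_mem_erase (Finset.mem_of_mem_erase h1),
            Finset.mem_of_mem_erase (Finset.mem_of_mem_erase h2)⟩
    · intro x hxU
      by_cases hx : x = p ∨ x = q
      · refine ⟨(p, q), ⟨Finset.mem_insert_self _ _, by tauto⟩, ?_⟩
        rintro f ⟨hf, hxf⟩
        rcases Finset.mem_insert.mp hf with rfl | hf'
        · rfl
        · exfalso
          have hend := hπ'.endpts hf'
          have hf1 := (hVH' f.1).mp hend.1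
          have hf2 := (hVH' f.2).mp hend.2
          rcases hxf with h | h <;> rcases hx with rfl | rfl
          exacts [hf1.2.1 h.symm, hf1.2.2 h.symm, hf2.2.1 h.symm, hf2.2.2 h.symm]
      · push_neg at hx
        have hxU' : x ∈ V ∪ H' := (hVH' x).mpr ⟨hxU, hx.1, hx.2⟩
        obtain ⟨e, ⟨he, hxe⟩, huniq⟩ := hπ'.2 x hxU'
        refine ⟨e, ⟨Finset.mem_insert_of_mem he, hxe⟩, ?_⟩
        rintro f ⟨hf, hxf⟩
        rcases Finset.mem_insert.mp hf with rfl | hf'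
        · exfalso; rcases hxf with h | h
          exacts [hx.1 h, hx.2 h]
        · exact huniq f ⟨hf', hxf⟩
  rw [Gsum, Finset.mul_sum]
  refine Finset.sum_bij' (i := fun π _ => π.erase (p, q)) (j := fun π' _ => insert (p, q) π')
    ?_ ?_ ?_ ?_ ?_
  · intro π hπ
    simp only [Finset.mem_filter, Finset.mem_univ, true_and] at hπ ⊢
    exact key_erase π hπ.1 hπ.2
  · intro π' hπ'
    simp only [Finset.mem_filter, Finset.mem_univ, true_and] at hπ' ⊢
    exact ⟨(key_insert π' hπ').1, Finset.mem_insert_self _ _⟩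
  · intro π hπ
    simp only [Finset.mem_filter, Finset.mem_univ, true_and] at hπ
    exact Finset.insert_erase hπ.2
  · intro π' hπ'
    simp only [Finset.mem_filter, Finset.mem_univ, true_and] at hπ'
    exact Finset.erase_insert ((key_insert π' hπ').2)
  · intro π hπ
    simp only [Finset.mem_filter, Finset.mem_univ, true_and] at hπ
    have hIs' := key_erase π hπ.1 hπ.2
    have hmin' : ∀ f ∈ π, f ≠ (p, q) → rlt (p, q).1 f.1 ∧ rlt (p, q).1 f.2 := by
      intro f hf hne
      have hend := hπ.1.endpts hf
      have hne1 : f.1 ≠ p := fun hx => hne (hπ.1.no_share hf hπ.2 (Or.inl rfl) (Or.inl hx))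
      have hne2 : f.2 ≠ p := fun hx => hne (hπ.1.no_share hf hπ.2 (Or.inr rfl) (Or.inl hx))
      exact ⟨hmin f.1 hend.1 hne1, hmin f.2 hend.2 hne2⟩
    rw [pmSign_erase hπ.2 hrpq hmin', countP_flatten hIs']

open Classical in
lemma Gsum_expand_V {V H : Finset (Fin m × Fin n)} {p : Fin m × Fin n}
    (hdisj : Disjoint V H) (hpV : p ∈ V)
    (hmin : ∀ x ∈ V ∪ H, x ≠ p → rlt p x) :
    Gsum V H = ∑ q ∈ (V.filter (fun y => y.2 = p.2)).erase p,
      (-1 : ℤ) ^ (((((V.erase p).erase q) ∪ H).filter (fun x => idx x < idx q)).card)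
        * Gsum ((V.erase p).erase q) H := by
  have hpH : p ∉ H := Finset.disjoint_left.mp hdisj hpV
  have hpU : p ∈ V ∪ H := Finset.mem_union_left _ hpV
  have hpart : (Finset.univ.filter (fun π => IsVH V H π)) =
      ((V.filter (fun y => y.2 = p.2)).erase p).biUnion
        (fun q => Finset.univ.filter (fun π => IsVH V H π ∧ (p, q) ∈ π)) := by
    ext π
    simp only [Finset.mem_filter, Finset.mem_biUnion, Finset.mem_univ, true_and]
    constructor
    · intro hπ
      obtain ⟨q, hq⟩ := partner_eq hπ hpU hmin
      have hty := hπ.1 _ hq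
      have hqV : q ∈ V ∧ q.2 = p.2 := by
        rcases hty.2 with ⟨hc, h1, h2⟩ | ⟨hr, h1, h2⟩
        · exact ⟨h2, hc.symm⟩
        · exact absurd h1 hpH
      exact ⟨q, Finset.mem_erase.mpr ⟨(rlt_ne hty.1).symm, Finset.mem_filter.mpr hqV⟩, hπ, hq⟩
    · rintro ⟨q, -, hπ, -⟩
      exact hπ
  rw [Gsum, hpart, Finset.sum_biUnion]
  swap
  · intro q1 hq1 q2 hq2 hne
    rw [Function.onFun, Finset.disjoint_left]
    rintro π hm1 hm2
    simp only [Finset.mem_filter, Finset.mem_univ, true_and] at hm1 hm2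
    have heq := hm1.1.no_share hm1.2 hm2.2 (x := p) (Or.inl rfl) (Or.inl rfl)
    exact hne (congrArg Prod.snd heq)
  apply Finset.sum_congr rfl
  intro q hqR
  obtain ⟨hqne, hqf⟩ := Finset.mem_erase.mp hqR
  obtain ⟨hqV, hqcol⟩ := Finset.mem_filter.mp hqf
  have hqH : q ∉ H := Finset.disjoint_left.mp hdisj hqV
  have hqU : q ∈ V ∪ H := Finset.mem_union_left _ hqV
  have hrpq : rlt p q := hmin q hqU hqne
  set V' := (V.erase p).erase q with hV'
  have hVH' : ∀ x, x ∈ V' ∪ H ↔ (x ∈ V ∪ H ∧ x ≠ p ∧ x ≠ q) := by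
    intro x
    simp only [Finset.mem_union, Finset.mem_erase, hV']
    constructor
    · rintro (⟨hxq, hxp, hx⟩ | hx)
      · exact ⟨Or.inl hx, hxp, hxq⟩
      · refine ⟨Or.inr hx, ?_, ?_⟩ <;> rintro rfl
        exacts [hpH hx, hqH hx]
    · rintro ⟨hx | hx, hxp, hxq⟩
      · exact Or.inl ⟨hxq, hxp, hx⟩
      · exact Or.inr hx
  have key_erase : ∀ π, IsVH V H π → (p, q) ∈ π → IsVH V' H (π.erase (p, q)) := by
    intro π hπ hpq
    constructor
    · intro e he
      have heπ : e ∈ π := Finset.mem_of_mem_erase he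
      have hne : e ≠ (p, q) := Finset.ne_of_mem_erase he
      have hty := hπ.1 e heπ
      have h1a : e.1 ≠ p := fun hx => hne (hπ.no_share heπ hpq (Or.inl rfl) (Or.inl hx))
      have h1b : e.2 ≠ p := fun hx => hne (hπ.no_share heπ hpq (Or.inr rfl) (Or.inl hx))
      have h1c : e.1 ≠ q := fun hx => hne (hπ.no_share heπ hpq (Or.inl rfl) (Or.inr hx))
      have h1d : e.2 ≠ q := fun hx => hne (hπ.no_share heπ hpq (Or.inr rfl) (Or.inr hx))
      refine ⟨hty.1, ?_⟩
      rcases hty.2 with ⟨hc, hV1, hV2⟩ | hHh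
      · exact Or.inl ⟨hc, Finset.mem_erase.mpr ⟨h1c, Finset.mem_erase.mpr ⟨h1a, hV1⟩⟩,
          Finset.mem_erase.mpr ⟨h1d, Finset.mem_erase.mpr ⟨h1b, hV2⟩⟩⟩
      · exact Or.inr hHh
    · intro x hx
      obtain ⟨hxU, hxp, hxq⟩ := (hVH' x).mp hx
      obtain ⟨e, ⟨he, hxe⟩, huniq⟩ := hπ.2 x hxU
      have hepq : e ≠ (p, q) := by
        rintro rfl
        rcases hxe with h | h
        exacts [hxp h, hxq h]
      exact ⟨e, ⟨Finset.mem_erase.mpr ⟨hepq, he⟩, hxe⟩,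
        fun f hf => huniq f ⟨Finset.mem_of_mem_erase hf.1, hf.2⟩⟩
  have key_insert : ∀ π', IsVH V' H π' → IsVH V H (insert (p, q) π') ∧ (p, q) ∉ π' := by
    intro π' hπ'
    have hnot : (p, q) ∉ π' := by
      intro hmem
      have h5 := (hπ'.endpts hmem).1
      rw [hVH' p] at h5
      exact h5.2.1 rfl
    refine ⟨⟨?_, ?_⟩, hnot⟩
    · intro e he
      rcases Finset.mem_insert.mp he with rfl | he'
      · exact ⟨hrpq, Or.inl ⟨hqcol.symm, hpV, hqV⟩⟩
      · have hty := hπ'.1 e he'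
        refine ⟨hty.1, ?_⟩
        rcases hty.2 with ⟨hc, h1, h2⟩ | hHh
        · exact Or.inl ⟨hc, Finset.mem_of_mem_erase (Finset.mem_of_mem_erase h1),
            Finset.mem_of_mem_erase (Finset.mem_of_mem_erase h2)⟩
        · exact Or.inr hHh
    · intro x hxU
      by_cases hx : x = p ∨ x = q
      · refine ⟨(p, q), ⟨Finset.mem_insert_self _ _, by tauto⟩, ?_⟩
        rintro f ⟨hf, hxf⟩
        rcases Finset.mem_insert.mp hf with rfl | hf'
        · rfl
        · exfalso
          have hend := hπ'.endpts hf'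
          have hf1 := (hVH' f.1).mp hend.1
          have hf2 := (hVH' f.2).mp hend.2
          rcases hxf with h | h <;> rcases hx with rfl | rfl
          exacts [hf1.2.1 h.symm, hf1.2.2 h.symm, hf2.2.1 h.symm, hf2.2.2 h.symm]
      · push_neg at hx
        have hxU' : x ∈ V' ∪ H := (hVH' x).mpr ⟨hxU, hx.1, hx.2⟩
        obtain ⟨e, ⟨he, hxe⟩, huniq⟩ := hπ'.2 x hxU'
        refine ⟨e, ⟨Finset.mem_insert_of_mem he, hxe⟩, ?_⟩
        rintro f ⟨hf, hxf⟩
        rcases Finset.mem_insert.mp hf with rfl | hf'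
        · exfalso; rcases hxf with h | h
          exacts [hx.1 h, hx.2 h]
        · exact huniq f ⟨hf', hxf⟩
  rw [Gsum, Finset.mul_sum]
  refine Finset.sum_bij' (i := fun π _ => π.erase (p, q)) (j := fun π' _ => insert (p, q) π')
    ?_ ?_ ?_ ?_ ?_
  · intro π hπ
    simp only [Finset.mem_filter, Finset.mem_univ, true_and] at hπ ⊢
    exact key_erase π hπ.1 hπ.2
  · intro π' hπ'
    simp only [Finset.mem_filter, Finset.mem_univ, true_and] at hπ' ⊢
    exact ⟨(key_insert π' hπ').1, Finset.mem_insert_self _ _⟩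
  · intro π hπ
    simp only [Finset.mem_filter, Finset.mem_univ, true_and] at hπ
    exact Finset.insert_erase hπ.2
  · intro π' hπ'
    simp only [Finset.mem_filter, Finset.mem_univ, true_and] at hπ'
    exact Finset.erase_insert ((key_insert π' hπ').2)
  · intro π hπ
    simp only [Finset.mem_filter, Finset.mem_univ, true_and] at hπ
    have hIs' := key_erase π hπ.1 hπ.2
    have hmin' : ∀ f ∈ π, f ≠ (p, q) → rlt (p, q).1 f.1 ∧ rlt (p, q).1 f.2 := by
      intro f hf hne
      have hend := hπ.1.endpts hf
      have hne1 : f.1 ≠ p := fun hx => hne (hπ.1.no_share hf hπ.2 (Or.inl rfl) (Or.inl hx))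
      have hne2 : f.2 ≠ p := fun hx => hne (hπ.1.no_share hf hπ.2 (Or.inr rfl) (Or.inl hx))
      exact ⟨hmin f.1 hend.1 hne1, hmin f.2 hend.2 hne2⟩
    rw [pmSign_erase hπ.2 hrpq hmin', countP_flatten hIs']

end Expand


section Signs

variable {m n : ℕ}

lemma invV_cast (V : Finset (Fin m × Fin n)) :
    ((invV V : ℕ) : ZMod 2) = ∑ a ∈ V, ∑ b ∈ V,
      (if rlt a b ∧ a.1 < b.1 ∧ b.2 < a.2 then (1 : ZMod 2) else 0) := by
  rw [invV, card_filter_cast, Finset.sum_product]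

lemma invMix_cast (V H : Finset (Fin m × Fin n)) :
    ((invMix V H : ℕ) : ZMod 2) = ∑ a ∈ H, ∑ b ∈ V,
      (if rlt a b then (1 : ZMod 2) else 0) := by
  rw [invMix, card_filter_cast, Finset.sum_product]

lemma pw_H {p q y : Fin m × Fin n} (hpy : rlt p y) (hyq : y ≠ q) :
    ((if rlt p y then (1 : ZMod 2) else 0) + (if rlt q y then 1 else 0) +
      (if idx y < idx q then 1 else 0)) = 0 := by
  rcases rlt_trichotomy q y with h | h | h
  · rw [if_pos hpy, if_pos h, if_neg (fun hc => rlt_asymm h (rlt_iff_idx.mpr hc))]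
    decide
  · exact absurd h.symm hyq
  · rw [if_pos hpy, if_neg (rlt_asymm h), if_pos (rlt_iff_idx.mp h)]
    decide

lemma two_mul_zmod (x : ZMod 2) : x + x = 0 := by
  fin_cases x <;> decide

lemma term_H {V H : Finset (Fin m × Fin n)} {p q : Fin m × Fin n}
    (hdisj : Disjoint V H) (hpH : p ∈ H) (hqH : q ∈ H) (hqrow : q.1 = p.1)
    (hqne : q ≠ p) (hmin : ∀ x ∈ V ∪ H, x ≠ p → rlt p x) :
    (-1 : ℤ) ^ (((V ∪ ((H.erase p).erase q)).filter (fun x => idx x < idx q)).card)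
      * sgnVH V ((H.erase p).erase q)
    = (-1 : ℤ) ^ (((H.filter (fun y => y.1 = p.1)).filter (fun y => rlt y q)).card + 1)
      * sgnVH V H := by
  have hrpq : rlt p q := hmin q (Finset.mem_union_right _ hqH) hqne
  set H' := (H.erase p).erase q with hH'
  have hsub : H' ⊆ H := (Finset.erase_subset _ _).trans (Finset.erase_subset _ _)
  have hdisj' : Disjoint V H' := Finset.disjoint_of_subset_right hsub hdisj
  unfold sgnVH
  rw [← pow_add, ← pow_add]
  apply neg_one_pow_congr_zmod
  push_cast
  have hBsplit : ((V ∪ H').filter (fun x => idx x < idx q)) =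
      (V.filter fun x => idx x < idx q) ∪ (H'.filter fun x => idx x < idx q) :=
    Finset.filter_union _ _ _
  have hBcard : ((((V ∪ H').filter (fun x => idx x < idx q)).card : ℕ) : ZMod 2) =
      (((V.filter fun x => idx x < idx q).card : ℕ) : ZMod 2)
      + (((H'.filter fun x => idx x < idx q).card : ℕ) : ZMod 2) := by
    rw [hBsplit, Finset.card_union_of_disjoint
      (Finset.disjoint_filter_filter hdisj')]
    push_cast
    ring
  have hMix : ((invMix V H : ℕ) : ZMod 2) = ((invMix V H' : ℕ) : ZMod 2)
      + (∑ b ∈ V, if rlt p b then (1 : ZMod 2) else 0)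
      + (∑ b ∈ V, if rlt q b then (1 : ZMod 2) else 0) := by
    rw [invMix_cast, invMix_cast,
      sum_erase2 hpH hqH hqne.symm (f := fun a => ∑ b ∈ V, if rlt a b then (1 : ZMod 2) else 0)]
    rw [← hH']
    ring
  have hPtSum : (∑ b ∈ V, if rlt p b then (1 : ZMod 2) else 0)
      + (∑ b ∈ V, if rlt q b then (1 : ZMod 2) else 0)
      + (∑ b ∈ V, if idx b < idx q then (1 : ZMod 2) else 0) = 0 := by
    rw [← Finset.sum_add_distrib, ← Finset.sum_add_distrib]
    apply Finset.sum_eq_zero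
    intro y hy
    have hyp : y ≠ p := by rintro rfl; exact (Finset.disjoint_left.mp hdisj hy) hpH
    have hyq : y ≠ q := by rintro rfl; exact (Finset.disjoint_left.mp hdisj hy) hqH
    exact pw_H (hmin y (Finset.mem_union_left _ hy) hyp) hyq
  have hVcard : (((V.filter fun x => idx x < idx q).card : ℕ) : ZMod 2) =
      ∑ b ∈ V, if idx b < idx q then (1 : ZMod 2) else 0 := card_filter_cast _ _
  have hfilterHq : H.filter (fun x => idx x < idx q) =
      (H.filter (fun y => y.1 = p.1)).filter (fun y => rlt y q) := by
    rw [Finset.filter_filter]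
    ext x
    simp only [Finset.mem_filter]
    constructor
    · rintro ⟨hxH, hxq⟩
      rw [← rlt_iff_idx] at hxq
      refine ⟨hxH, ?_, hxq⟩
      by_cases hxp : x = p
      · rw [hxp]
      · have h5 := hmin x (Finset.mem_union_right _ hxH) hxp
        simp only [rlt, Fin.lt_def, Fin.ext_iff] at hxq h5 hqrow ⊢
        omega
    · rintro ⟨hxH, -, hxq⟩
      exact ⟨hxH, rlt_iff_idx.mp hxq⟩
  have hH'filter : H'.filter (fun x => idx x < idx q) =
      ((H.filter fun x => idx x < idx q).erase p).erase q := by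
    rw [hH', Finset.filter_erase, Finset.filter_erase]
  have hqnotin : q ∉ (H.filter fun x => idx x < idx q).erase p := by
    simp [Finset.mem_erase, Finset.mem_filter]
  have hpin : p ∈ H.filter fun x => idx x < idx q :=
    Finset.mem_filter.mpr ⟨hpH, rlt_iff_idx.mp hrpq⟩
  have hKcard : (H.filter fun x => idx x < idx q).card =
      (H'.filter (fun x => idx x < idx q)).card + 1 := by
    rw [hH'filter, Finset.erase_eq_of_notMem hqnotin, Finset.card_erase_of_mem hpin]
    have hpos : 0 < (H.filter fun x => idx x < idx q).card :=
      Finset.card_pos.mpr ⟨p, hpin⟩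
    omega
  have hK : ((((H.filter (fun y => y.1 = p.1)).filter (fun y => rlt y q)).card : ℕ) : ZMod 2) =
      (((H'.filter (fun x => idx x < idx q)).card : ℕ) : ZMod 2) + 1 := by
    rw [← hfilterHq, hKcard]
    push_cast
    ring
  have h2a := two_mul_zmod (∑ b ∈ V, if rlt p b then (1 : ZMod 2) else 0)
  have h2b := two_mul_zmod (∑ b ∈ V, if rlt q b then (1 : ZMod 2) else 0)
  have h2c := two_mul_zmod (1 : ZMod 2)
  linear_combination hBcard + hVcard + hPtSum - hMix + hK - h2a - h2b - h2c - 2 * hK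


/-- Indicator for an `invV`-inversion pair, in `ZMod 2`. -/
def chiZ {m n : ℕ} (a b : Fin m × Fin n) : ZMod 2 :=
  if rlt a b ∧ a.1 < b.1 ∧ b.2 < a.2 then 1 else 0

lemma invV_cast' (V : Finset (Fin m × Fin n)) :
    ((invV V : ℕ) : ZMod 2) = ∑ a ∈ V, ∑ b ∈ V, chiZ a b := by
  rw [invV_cast]; rfl

lemma pw_V {p q x : Fin m × Fin n} (hpq : rlt p q) (hcol : p.2 = q.2)
    (hx : x = p ∨ rlt p x) :
    (if idx x < idx q then (1 : ZMod 2) else 0)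
      + (chiZ p x + chiZ q x + chiZ x p + chiZ x q)
      + (if x.2 = p.2 ∧ rlt x q then 1 else 0) = 0 := by
  simp only [← rlt_iff_idx]
  unfold chiZ
  obtain ⟨⟨p1,hp1⟩,⟨p2,hp2⟩⟩ := p
  obtain ⟨⟨q1,hq1⟩,⟨q2,hq2⟩⟩ := q
  obtain ⟨⟨x1,hh1⟩,⟨x2,hh2⟩⟩ := x
  simp only [rlt, Fin.lt_def, Fin.mk_lt_mk, Fin.mk.injEq, Prod.mk.injEq,
    Fin.ext_iff] at hpq hcol hx ⊢
  split_ifs <;> first | decide | (exfalso; omega)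

lemma term_V {V H : Finset (Fin m × Fin n)} {p q : Fin m × Fin n}
    (hdisj : Disjoint V H) (hpV : p ∈ V) (hqV : q ∈ V) (hqcol : q.2 = p.2)
    (hqne : q ≠ p) (hmin : ∀ x ∈ V ∪ H, x ≠ p → rlt p x) :
    (-1 : ℤ) ^ (((((V.erase p).erase q) ∪ H).filter (fun x => idx x < idx q)).card)
      * sgnVH ((V.erase p).erase q) H
    = (-1 : ℤ) ^ (((V.filter (fun y => y.2 = p.2)).filter (fun y => rlt y q)).card + 1)
      * sgnVH V H := by
  have hrpq : rlt p q := hmin q (Finset.mem_union_left _ hqV) hqne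
  set V' := (V.erase p).erase q with hV'
  have hsub : V' ⊆ V := (Finset.erase_subset _ _).trans (Finset.erase_subset _ _)
  have hdisj' : Disjoint V' H := Finset.disjoint_of_subset_left hsub hdisj
  have hcol : p.2 = q.2 := hqcol.symm
  unfold sgnVH
  rw [← pow_add, ← pow_add]
  apply neg_one_pow_congr_zmod
  push_cast
  have hBcard : ((((V' ∪ H).filter (fun x => idx x < idx q)).card : ℕ) : ZMod 2) =
      (((V'.filter fun x => idx x < idx q).card : ℕ) : ZMod 2)
      + (((H.filter fun x => idx x < idx q).card : ℕ) : ZMod 2) := by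
    rw [Finset.filter_union, Finset.card_union_of_disjoint
      (Finset.disjoint_filter_filter hdisj')]
    push_cast
    ring
  have hinner : ∀ a : Fin m × Fin n, (∑ b ∈ V, if rlt a b then (1 : ZMod 2) else 0)
      = (if rlt a p then (1 : ZMod 2) else 0) + (if rlt a q then 1 else 0)
        + ∑ b ∈ V', if rlt a b then (1 : ZMod 2) else 0 := by
    intro a
    rw [sum_erase2 hpV hqV hqne.symm (f := fun b => if rlt a b then (1 : ZMod 2) else 0), hV']
    try ring
  have hMix : ((invMix V H : ℕ) : ZMod 2) = ((invMix V' H : ℕ) : ZMod 2)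
      + (∑ a ∈ H, if rlt a p then (1 : ZMod 2) else 0)
      + (∑ a ∈ H, if rlt a q then (1 : ZMod 2) else 0) := by
    rw [invMix_cast, invMix_cast]
    calc ∑ a ∈ H, ∑ b ∈ V, (if rlt a b then (1 : ZMod 2) else 0)
        = ∑ a ∈ H, ((if rlt a p then (1 : ZMod 2) else 0) + (if rlt a q then 1 else 0)
          + ∑ b ∈ V', if rlt a b then (1 : ZMod 2) else 0) :=
          Finset.sum_congr rfl (fun a _ => hinner a)
      _ = _ := by rw [Finset.sum_add_distrib, Finset.sum_add_distrib]; ring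
  have hMp : (∑ a ∈ H, if rlt a p then (1 : ZMod 2) else 0) = 0 := by
    apply Finset.sum_eq_zero
    intro a ha
    rw [if_neg]
    intro hc
    have hap : a ≠ p := by rintro rfl; exact (Finset.disjoint_left.mp hdisj hpV) ha
    exact rlt_asymm (hmin a (Finset.mem_union_right _ ha) hap) hc
  have hMq : (∑ a ∈ H, if rlt a q then (1 : ZMod 2) else 0) =
      (((H.filter fun x => idx x < idx q).card : ℕ) : ZMod 2) := by
    rw [card_filter_cast]
    exact Finset.sum_congr rfl (fun a _ => if_congr rlt_iff_idx rfl rfl)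
  have hchi_inner : ∀ a, (∑ b ∈ V, chiZ a b) = chiZ a p + chiZ a q + ∑ b ∈ V', chiZ a b := by
    intro a
    rw [sum_erase2 hpV hqV hqne.symm (f := fun b => chiZ a b), hV']
    try ring
  have hzero1 : chiZ p p = (0 : ZMod 2) := by
    unfold chiZ; rw [if_neg]; rintro ⟨-, h, -⟩; exact lt_irrefl _ h
  have hzero2 : chiZ q q = (0 : ZMod 2) := by
    unfold chiZ; rw [if_neg]; rintro ⟨-, h, -⟩; exact lt_irrefl _ h
  have hzero3 : chiZ p q = (0 : ZMod 2) := by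
    unfold chiZ; rw [if_neg]; rintro ⟨-, -, h⟩; rw [hcol] at h; exact lt_irrefl _ h
  have hzero4 : chiZ q p = (0 : ZMod 2) := by
    unfold chiZ; rw [if_neg]; rintro ⟨h, -, -⟩; exact rlt_asymm hrpq h
  have e1 : (∑ a ∈ V, ∑ b ∈ V, chiZ a b)
      = (∑ a ∈ V, chiZ a p) + (∑ a ∈ V, chiZ a q) + ∑ a ∈ V, ∑ b ∈ V', chiZ a b := by
    calc ∑ a ∈ V, ∑ b ∈ V, chiZ a b
        = ∑ a ∈ V, (chiZ a p + chiZ a q + ∑ b ∈ V', chiZ a b) :=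
          Finset.sum_congr rfl (fun a _ => hchi_inner a)
      _ = _ := by rw [Finset.sum_add_distrib, Finset.sum_add_distrib]
  have e2 : (∑ a ∈ V, ∑ b ∈ V', chiZ a b)
      = (∑ b ∈ V', chiZ p b) + (∑ b ∈ V', chiZ q b) + ∑ a ∈ V', ∑ b ∈ V', chiZ a b := by
    rw [sum_erase2 hpV hqV hqne.symm (f := fun a => ∑ b ∈ V', chiZ a b), hV']
    try ring
  have e3 : (∑ b ∈ V, chiZ p b) = ∑ b ∈ V', chiZ p b := by
    have h := hchi_inner p
    rw [hzero1, hzero3] at h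
    simpa using h
  have e4 : (∑ b ∈ V, chiZ q b) = ∑ b ∈ V', chiZ q b := by
    have h := hchi_inner q
    rw [hzero4, hzero2] at h
    simpa using h
  have hIv : ((invV V : ℕ) : ZMod 2) = ((invV V' : ℕ) : ZMod 2)
      + (∑ x ∈ V, chiZ p x) + (∑ x ∈ V, chiZ q x)
      + (∑ x ∈ V, chiZ x p) + (∑ x ∈ V, chiZ x q) := by
    rw [invV_cast', invV_cast']
    linear_combination e1 + e2 - e3 - e4
  have hVc : (∑ x ∈ V, if idx x < idx q then (1 : ZMod 2) else 0)
      = 1 + (((V'.filter fun x => idx x < idx q).card : ℕ) : ZMod 2) := by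
    rw [sum_erase2 hpV hqV hqne.symm
      (f := fun x => if idx x < idx q then (1 : ZMod 2) else 0), hV']
    rw [if_pos (rlt_iff_idx.mp hrpq), if_neg (lt_irrefl _), card_filter_cast]
    try ring
  have hMaster : (∑ x ∈ V, if idx x < idx q then (1 : ZMod 2) else 0)
      + (∑ x ∈ V, chiZ p x) + (∑ x ∈ V, chiZ q x)
      + (∑ x ∈ V, chiZ x p) + (∑ x ∈ V, chiZ x q)
      + (∑ x ∈ V, if x.2 = p.2 ∧ rlt x q then (1 : ZMod 2) else 0) = 0 := by
    rw [← Finset.sum_add_distrib, ← Finset.sum_add_distrib, ← Finset.sum_add_distrib,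
      ← Finset.sum_add_distrib, ← Finset.sum_add_distrib]
    apply Finset.sum_eq_zero
    intro x hx
    have hxc : x = p ∨ rlt p x := by
      by_cases h : x = p
      · exact Or.inl h
      · exact Or.inr (hmin x (Finset.mem_union_left _ hx) h)
    linear_combination pw_V hrpq hcol hxc
  have hK : ((((V.filter (fun y => y.2 = p.2)).filter (fun y => rlt y q)).card : ℕ) : ZMod 2)
      = ∑ x ∈ V, if x.2 = p.2 ∧ rlt x q then (1 : ZMod 2) else 0 := by
    rw [Finset.filter_filter, card_filter_cast]
  have h2a := two_mul_zmod (∑ x ∈ V, chiZ p x)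
  have h2b := two_mul_zmod (∑ x ∈ V, chiZ q x)
  have h2c := two_mul_zmod (∑ x ∈ V, chiZ x p)
  have h2d := two_mul_zmod (∑ x ∈ V, chiZ x q)
  have h2e := two_mul_zmod (1 : ZMod 2)
  have h2f := two_mul_zmod (∑ x ∈ V, if x.2 = p.2 ∧ rlt x q then (1 : ZMod 2) else 0)
  linear_combination hBcard + hVc + hMaster - hMix + hMp + hMq - hIv + hK
    - h2a - h2b - h2c - h2d - h2e - h2f - 2 * hK - 2 * hVc - 2 * hMp - 2 * hMq

end Signs


section Main

variable {m n : ℕ}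

open Classical in
lemma Gsum_empty : Gsum (∅ : Finset (Fin m × Fin n)) ∅ = 1 := by
  have hset : (Finset.univ.filter (fun π => IsVH (∅ : Finset (Fin m × Fin n)) ∅ π)) = {∅} := by
    ext π
    simp only [Finset.mem_filter, Finset.mem_univ, true_and, Finset.mem_singleton]
    constructor
    · intro h
      rw [Finset.eq_empty_iff_forall_notMem]
      intro e he
      rcases (h.1 e he).2 with ⟨-, h1, -⟩ | ⟨-, h1, -⟩ <;> exact absurd h1 (Finset.notMem_empty _)
    · rintro rfl
      exact ⟨fun e he => absurd he (Finset.notMem_empty _),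
        fun p hp => absurd hp (by simp)⟩
  rw [Gsum, hset, Finset.sum_singleton, pmSign_empty]

lemma sgnVH_empty : sgnVH (∅ : Finset (Fin m × Fin n)) ∅ = 1 := by
  unfold sgnVH invV invMix
  simp

open Classical in
lemma Gsum_eq : ∀ (N : ℕ) (V H : Finset (Fin m × Fin n)), (V ∪ H).card = N →
    Disjoint V H →
    (∀ j, Even ((V.filter fun y => y.2 = j).card)) →
    (∀ i, Even ((H.filter fun y => y.1 = i).card)) →
    Gsum V H = sgnVH V H := by
  intro N
  induction N using Nat.strong_induction_on with
  | _ N ih =>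
    intro V H hcard hdisj hVe hHe
    rcases Finset.eq_empty_or_nonempty (V ∪ H) with hU | hU
    · have hV0 : V = ∅ := by
        rw [← Finset.subset_empty, ← hU]; exact Finset.subset_union_left
      have hH0 : H = ∅ := by
        rw [← Finset.subset_empty, ← hU]; exact Finset.subset_union_right
      rw [hV0, hH0, Gsum_empty, sgnVH_empty]
    · obtain ⟨p, hpU, hpmin⟩ := Finset.exists_min_image (V ∪ H) idx hU
      have hmin : ∀ x ∈ V ∪ H, x ≠ p → rlt p x := by
        intro x hx hne
        apply rlt_iff_idx.mpr
        rcases lt_or_eq_of_le (hpmin x hx) with h | h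
        · exact h
        · exact absurd (idx_inj h.symm) hne
      rcases Finset.mem_union.mp hpU with hpV | hpH
      · -- p is matched vertically
        have hpH' : p ∉ H := Finset.disjoint_left.mp hdisj hpV
        rw [Gsum_expand_V hdisj hpV hmin]
        have hpS : p ∈ V.filter (fun y => y.2 = p.2) := Finset.mem_filter.mpr ⟨hpV, rfl⟩
        have hSeven : Even (V.filter (fun y => y.2 = p.2)).card := hVe p.2
        have hterm : ∀ q ∈ (V.filter (fun y => y.2 = p.2)).erase p,
            (-1 : ℤ) ^ (((((V.erase p).erase q) ∪ H).filter (fun x => idx x < idx q)).card)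
              * Gsum ((V.erase p).erase q) H
            = (-1 : ℤ) ^ (((V.filter (fun y => y.2 = p.2)).filter (fun y => rlt y q)).card + 1)
              * sgnVH V H := by
          intro q hq
          obtain ⟨hqne, hqf⟩ := Finset.mem_erase.mp hq
          obtain ⟨hqV, hqcol⟩ := Finset.mem_filter.mp hqf
          have hqH' : q ∉ H := Finset.disjoint_left.mp hdisj hqV
          have hss : ((V.erase p).erase q) ∪ H ⊂ V ∪ H := by
            constructor
            · apply Finset.union_subset_union_left
              exact (Finset.erase_subset _ _).trans (Finset.erase_subset _ _)
            · intro hsub2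
              have hp2 := hsub2 (Finset.mem_union_left _ hpV)
              rcases Finset.mem_union.mp hp2 with h | h
              · exact (Finset.mem_erase.mp (Finset.mem_of_mem_erase h)).1 rfl
              · exact hpH' h
          have hlt : (((V.erase p).erase q) ∪ H).card < N := by
            rw [← hcard]; exact Finset.card_lt_card hss
          have hVe' : ∀ j, Even ((((V.erase p).erase q).filter fun y => y.2 = j).card) := by
            intro j
            rw [Finset.filter_erase, Finset.filter_erase]
            by_cases hj : j = p.2
            · subst hj
              have hqmem : q ∈ (V.filter fun y => y.2 = p.2).erase p :=
                Finset.mem_erase.mpr ⟨hqne, hqf⟩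
              rw [Finset.card_erase_of_mem hqmem, Finset.card_erase_of_mem hpS]
              rw [Nat.even_iff] at hSeven ⊢
              have hc2 : 2 ≤ (V.filter fun y => y.2 = p.2).card := by
                have := Finset.card_le_card (Finset.insert_subset hpS
                  (Finset.singleton_subset_iff.mpr hqf) : ({p, q} : Finset _) ⊆ _)
                simpa [Finset.card_insert_of_notMem, hqne.symm] using this
              omega
            · have hp1 : p ∉ V.filter (fun y => y.2 = j) := by
                simp only [Finset.mem_filter]
                rintro ⟨-, h⟩; exact hj h.symm
              have hq1 : q ∉ (V.filter (fun y => y.2 = j)).erase p := by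
                simp only [Finset.mem_erase, Finset.mem_filter]
                rintro ⟨-, -, h⟩; rw [hqcol] at h; exact hj h.symm
              rw [Finset.erase_eq_of_notMem hq1, Finset.erase_eq_of_notMem hp1]
              exact hVe j
          have hrec : Gsum ((V.erase p).erase q) H = sgnVH ((V.erase p).erase q) H := by
            apply ih _ hlt _ _ rfl
              (Finset.disjoint_of_subset_left
                ((Finset.erase_subset _ _).trans (Finset.erase_subset _ _)) hdisj)
              hVe' hHe
          rw [hrec]
          exact term_V hdisj hpV hqV hqcol hqne hmin
        rw [Finset.sum_congr rfl hterm, ← Finset.sum_mul]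
        have hminS : ∀ x ∈ V.filter (fun y => y.2 = p.2), x ≠ p → rlt p x := by
          intro x hx hne
          exact hmin x (Finset.mem_union_left _ (Finset.mem_filter.mp hx).1) hne
        rw [rank_alt_sum hpS hminS hSeven, one_mul]
      · -- p is matched horizontally
        have hpV' : p ∉ V := Finset.disjoint_right.mp hdisj hpH
        rw [Gsum_expand_H hdisj hpH hmin]
        have hpS : p ∈ H.filter (fun y => y.1 = p.1) := Finset.mem_filter.mpr ⟨hpH, rfl⟩
        have hSeven : Even (H.filter (fun y => y.1 = p.1)).card := hHe p.1
        have hterm : ∀ q ∈ (H.filter (fun y => y.1 = p.1)).erase p,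
            (-1 : ℤ) ^ (((V ∪ ((H.erase p).erase q)).filter (fun x => idx x < idx q)).card)
              * Gsum V ((H.erase p).erase q)
            = (-1 : ℤ) ^ (((H.filter (fun y => y.1 = p.1)).filter (fun y => rlt y q)).card + 1)
              * sgnVH V H := by
          intro q hq
          obtain ⟨hqne, hqf⟩ := Finset.mem_erase.mp hq
          obtain ⟨hqH, hqrow⟩ := Finset.mem_filter.mp hqf
          have hqV' : q ∉ V := Finset.disjoint_right.mp hdisj hqH
          have hss : V ∪ ((H.erase p).erase q) ⊂ V ∪ H := by
            constructor
            · apply Finset.union_subset_union_right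
              exact (Finset.erase_subset _ _).trans (Finset.erase_subset _ _)
            · intro hsub2
              have hp2 := hsub2 (Finset.mem_union_right _ hpH)
              rcases Finset.mem_union.mp hp2 with h | h
              · exact hpV' h
              · exact (Finset.mem_erase.mp (Finset.mem_of_mem_erase h)).1 rfl
          have hlt : (V ∪ ((H.erase p).erase q)).card < N := by
            rw [← hcard]; exact Finset.card_lt_card hss
          have hHe' : ∀ i, Even ((((H.erase p).erase q).filter fun y => y.1 = i).card) := by
            intro i
            rw [Finset.filter_erase, Finset.filter_erase]
            by_cases hi : i = p.1
            · subst hi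
              have hqmem : q ∈ (H.filter fun y => y.1 = p.1).erase p :=
                Finset.mem_erase.mpr ⟨hqne, hqf⟩
              rw [Finset.card_erase_of_mem hqmem, Finset.card_erase_of_mem hpS]
              rw [Nat.even_iff] at hSeven ⊢
              have hc2 : 2 ≤ (H.filter fun y => y.1 = p.1).card := by
                have := Finset.card_le_card (Finset.insert_subset hpS
                  (Finset.singleton_subset_iff.mpr hqf) : ({p, q} : Finset _) ⊆ _)
                simpa [Finset.card_insert_of_notMem, hqne.symm] using this
              omega
            · have hp1 : p ∉ H.filter (fun y => y.1 = i) := by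
                simp only [Finset.mem_filter]
                rintro ⟨-, h⟩; exact hi h.symm
              have hq1 : q ∉ (H.filter (fun y => y.1 = i)).erase p := by
                simp only [Finset.mem_erase, Finset.mem_filter]
                rintro ⟨-, -, h⟩; rw [hqrow] at h; exact hi h.symm
              rw [Finset.erase_eq_of_notMem hq1, Finset.erase_eq_of_notMem hp1]
              exact hHe i
          have hrec : Gsum V ((H.erase p).erase q) = sgnVH V ((H.erase p).erase q) := by
            apply ih _ hlt _ _ rfl
              (Finset.disjoint_of_subset_right
                ((Finset.erase_subset _ _).trans (Finset.erase_subset _ _)) hdisj)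
              hVe hHe'
          rw [hrec]
          exact term_H hdisj hpH hqH hqrow hqne hmin
        rw [Finset.sum_congr rfl hterm, ← Finset.sum_mul]
        have hminS : ∀ x ∈ H.filter (fun y => y.1 = p.1), x ≠ p → rlt p x := by
          intro x hx hne
          exact hmin x (Finset.mem_union_right _ (Finset.mem_filter.mp hx).1) hne
        rw [rank_alt_sum hpS hminS hSeven, one_mul]

end Main


/-- The vertically matched squares of a matching. -/
def Vpart {m n : ℕ} (π : Finset ((Fin m × Fin n) × (Fin m × Fin n))) :
    Finset (Fin m × Fin n) :=
  π.biUnion fun e => if e.1.2 = e.2.2 then {e.1, e.2} else ∅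

/-- The horizontally matched squares of a matching. -/
def Hpart {m n : ℕ} (π : Finset ((Fin m × Fin n) × (Fin m × Fin n))) :
    Finset (Fin m × Fin n) :=
  π.biUnion fun e => if e.1.2 = e.2.2 then ∅ else {e.1, e.2}

section Bridge

variable {m n : ℕ}

lemma mem_Vpart {π : Finset ((Fin m × Fin n) × (Fin m × Fin n))} {x : Fin m × Fin n} :
    x ∈ Vpart π ↔ ∃ e ∈ π, e.1.2 = e.2.2 ∧ (x = e.1 ∨ x = e.2) := by
  simp only [Vpart, Finset.mem_biUnion]
  constructor
  · rintro ⟨e, he, hx⟩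
    by_cases hc : e.1.2 = e.2.2
    · rw [if_pos hc] at hx
      simp only [Finset.mem_insert, Finset.mem_singleton] at hx
      exact ⟨e, he, hc, hx⟩
    · rw [if_neg hc] at hx
      exact absurd hx (Finset.notMem_empty _)
  · rintro ⟨e, he, hc, hx⟩
    exact ⟨e, he, by rw [if_pos hc]; simpa using hx⟩

lemma mem_Hpart {π : Finset ((Fin m × Fin n) × (Fin m × Fin n))} {x : Fin m × Fin n} :
    x ∈ Hpart π ↔ ∃ e ∈ π, ¬(e.1.2 = e.2.2) ∧ (x = e.1 ∨ x = e.2) := by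
  simp only [Hpart, Finset.mem_biUnion]
  constructor
  · rintro ⟨e, he, hx⟩
    by_cases hc : e.1.2 = e.2.2
    · rw [if_pos hc] at hx
      exact absurd hx (Finset.notMem_empty _)
    · rw [if_neg hc] at hx
      simp only [Finset.mem_insert, Finset.mem_singleton] at hx
      exact ⟨e, he, hc, hx⟩
  · rintro ⟨e, he, hc, hx⟩
    exact ⟨e, he, by rw [if_neg hc]; simpa using hx⟩

lemma pm_no_share {C : Diagram m n} {π} (h : IsPM C π) {e f} (he : e ∈ π) (hf : f ∈ π)
    {x} (hxe : x = e.1 ∨ x = e.2) (hxf : x = f.1 ∨ x = f.2) : e = f := by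
  have hx : x ∈ whites C := by
    rcases hxe with rfl | rfl
    exacts [(h.1 e he).2.2.1, (h.1 e he).2.2.2]
  obtain ⟨g, -, hg⟩ := h.2 x hx
  rw [hg e ⟨he, hxe⟩, hg f ⟨hf, hxf⟩]

lemma isPM_isVH {C : Diagram m n} {π} (h : IsPM C π) : IsVH (Vpart π) (Hpart π) π := by
  constructor
  · intro e he
    obtain ⟨hrlt, hrc, hw1, hw2⟩ := h.1 e he
    refine ⟨hrlt, ?_⟩
    by_cases hc : e.1.2 = e.2.2
    · exact Or.inl ⟨hc, mem_Vpart.mpr ⟨e, he, hc, Or.inl rfl⟩,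
        mem_Vpart.mpr ⟨e, he, hc, Or.inr rfl⟩⟩
    · have hr : e.1.1 = e.2.1 := by
        rcases hrc with h' | h'
        exacts [h', absurd h' hc]
      exact Or.inr ⟨hr, mem_Hpart.mpr ⟨e, he, hc, Or.inl rfl⟩,
        mem_Hpart.mpr ⟨e, he, hc, Or.inr rfl⟩⟩
  · intro x hx
    have hxw : x ∈ whites C := by
      rcases Finset.mem_union.mp hx with hx' | hx'
      · obtain ⟨e, he, hc, hxe⟩ := mem_Vpart.mp hx'
        rcases hxe with rfl | rfl
        exacts [(h.1 e he).2.2.1, (h.1 e he).2.2.2]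
      · obtain ⟨e, he, hc, hxe⟩ := mem_Hpart.mp hx'
        rcases hxe with rfl | rfl
        exacts [(h.1 e he).2.2.1, (h.1 e he).2.2.2]
    exact h.2 x hxw

lemma parts_union {C : Diagram m n} {π} (h : IsPM C π) : Vpart π ∪ Hpart π = whites C := by
  ext x
  simp only [Finset.mem_union, mem_Vpart, mem_Hpart]
  constructor
  · rintro (⟨e, he, -, hxe⟩ | ⟨e, he, -, hxe⟩) <;>
      (rcases hxe with rfl | rfl; exacts [(h.1 e he).2.2.1, (h.1 e he).2.2.2])
  · intro hxw
    obtain ⟨e, ⟨he, hxe⟩, -⟩ := h.2 x hxw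
    by_cases hc : e.1.2 = e.2.2
    · exact Or.inl ⟨e, he, hc, hxe⟩
    · exact Or.inr ⟨e, he, hc, hxe⟩

lemma parts_disjoint {C : Diagram m n} {π} (h : IsPM C π) :
    Disjoint (Vpart π) (Hpart π) := by
  rw [Finset.disjoint_left]
  rintro x hxV hxH
  obtain ⟨e, he, hce, hxe⟩ := mem_Vpart.mp hxV
  obtain ⟨f, hf, hcf, hxf⟩ := mem_Hpart.mp hxH
  have hef : e = f := pm_no_share h he hf hxe hxf
  rw [hef] at hce
  exact hcf hce

lemma parts_colEven {C : Diagram m n} {π} (h : IsPM C π) (j : Fin n) :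
    Even (((Vpart π).filter fun y => y.2 = j).card) := by
  have hset : (Vpart π).filter (fun y => y.2 = j) =
      (π.filter (fun e => e.1.2 = e.2.2 ∧ e.1.2 = j)).biUnion (fun e => {e.1, e.2}) := by
    ext x
    simp only [Finset.mem_filter, mem_Vpart, Finset.mem_biUnion, Finset.mem_insert,
      Finset.mem_singleton]
    constructor
    · rintro ⟨⟨e, he, hc, hx⟩, hj⟩
      refine ⟨e, ⟨he, hc, ?_⟩, hx⟩
      rcases hx with rfl | rfl
      exacts [hj, by rw [hc]; exact hj]
    · rintro ⟨e, ⟨he, hc, hj⟩, hx⟩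
      refine ⟨⟨e, he, hc, hx⟩, ?_⟩
      rcases hx with rfl | rfl
      exacts [hj, by rw [← hc]; exact hj]
  rw [hset, Finset.card_biUnion]
  · have hc2 : ∀ e ∈ π.filter (fun e => e.1.2 = e.2.2 ∧ e.1.2 = j),
        ({e.1, e.2} : Finset (Fin m × Fin n)).card = 2 := by
      intro e he
      exact Finset.card_pair (rlt_ne (h.1 e (Finset.mem_of_mem_filter _ he)).1)
    rw [Finset.sum_congr rfl hc2, Finset.sum_const, smul_eq_mul]
    exact ⟨_, by ring⟩
  · intro e he f hf hef
    simp only [Finset.disjoint_left, Finset.mem_insert, Finset.mem_singleton]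
    rintro x hxe hxf
    exact hef (pm_no_share h (Finset.mem_of_mem_filter _ he)
      (Finset.mem_of_mem_filter _ hf) hxe hxf)

lemma parts_rowEven {C : Diagram m n} {π} (h : IsPM C π) (i : Fin m) :
    Even (((Hpart π).filter fun y => y.1 = i).card) := by
  have hset : (Hpart π).filter (fun y => y.1 = i) =
      (π.filter (fun e => ¬(e.1.2 = e.2.2) ∧ e.1.1 = i)).biUnion (fun e => {e.1, e.2}) := by
    ext x
    simp only [Finset.mem_filter, mem_Hpart, Finset.mem_biUnion, Finset.mem_insert,
      Finset.mem_singleton]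
    constructor
    · rintro ⟨⟨e, he, hc, hx⟩, hi⟩
      have hr : e.1.1 = e.2.1 := by
        rcases (h.1 e he).2.1 with h' | h'
        exacts [h', absurd h' hc]
      refine ⟨e, ⟨he, hc, ?_⟩, hx⟩
      rcases hx with rfl | rfl
      exacts [hi, by rw [hr]; exact hi]
    · rintro ⟨e, ⟨he, hc, hi⟩, hx⟩
      have hr : e.1.1 = e.2.1 := by
        rcases (h.1 e he).2.1 with h' | h'
        exacts [h', absurd h' hc]
      refine ⟨⟨e, he, hc, hx⟩, ?_⟩
      rcases hx with rfl | rfl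
      exacts [hi, by rw [← hr]; exact hi]
  rw [hset, Finset.card_biUnion]
  · have hc2 : ∀ e ∈ π.filter (fun e => ¬(e.1.2 = e.2.2) ∧ e.1.1 = i),
        ({e.1, e.2} : Finset (Fin m × Fin n)).card = 2 := by
      intro e he
      exact Finset.card_pair (rlt_ne (h.1 e (Finset.mem_of_mem_filter _ he)).1)
    rw [Finset.sum_congr rfl hc2, Finset.sum_const, smul_eq_mul]
    exact ⟨_, by ring⟩
  · intro e he f hf hef
    simp only [Finset.disjoint_left, Finset.mem_insert, Finset.mem_singleton]
    rintro x hxe hxf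
    exact hef (pm_no_share h (Finset.mem_of_mem_filter _ he)
      (Finset.mem_of_mem_filter _ hf) hxe hxf)

lemma parts_decomp {C : Diagram m n} {π} (h : IsPM C π) :
    IsDecomp C (Vpart π) (Hpart π) ∧ excess (Hpart π) = 0 := by
  refine ⟨⟨parts_disjoint h, parts_union h, parts_colEven h⟩, ?_⟩
  funext i
  show (((Hpart π).filter fun y => y.1 = i).card : ZMod 2) = 0
  exact (even_iff_cast_zero _).mp (parts_rowEven h i)

lemma isVH_to_isPM {C : Diagram m n} {V H : Finset (Fin m × Fin n)} {π}
    (hdec : IsDecomp C V H) (hIs : IsVH V H π) :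
    IsPM C π ∧ Vpart π = V ∧ Hpart π = H := by
  obtain ⟨hdisj, hun, -⟩ := hdec
  have hpm : IsPM C π := by
    constructor
    · intro e he
      obtain ⟨hrlt, hty⟩ := hIs.1 e he
      have h1 : e.1 ∈ whites C := by rw [← hun]; exact (hIs.endpts he).1
      have h2 : e.2 ∈ whites C := by rw [← hun]; exact (hIs.endpts he).2
      refine ⟨hrlt, ?_, h1, h2⟩
      rcases hty with ⟨hc, -, -⟩ | ⟨hr, -, -⟩
      exacts [Or.inr hc, Or.inl hr]
    · intro x hx
      rw [← hun] at hx
      exact hIs.2 x hx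
  refine ⟨hpm, ?_, ?_⟩
  · ext x
    rw [mem_Vpart]
    constructor
    · rintro ⟨e, he, hc, hxe⟩
      rcases (hIs.1 e he).2 with ⟨-, h1, h2⟩ | ⟨hr, h1, h2⟩
      · rcases hxe with rfl | rfl
        exacts [h1, h2]
      · exact absurd (Prod.ext hr hc) (rlt_ne (hIs.1 e he).1)
    · intro hxV
      obtain ⟨e, ⟨he, hxe⟩, -⟩ := hIs.2 x (Finset.mem_union_left _ hxV)
      rcases (hIs.1 e he).2 with ⟨hc, -, -⟩ | ⟨-, h1, h2⟩
      · exact ⟨e, he, hc, hxe⟩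
      · exfalso
        have hxH : x ∈ H := by
          rcases hxe with rfl | rfl
          exacts [h1, h2]
        exact (Finset.disjoint_left.mp hdisj hxV) hxH
  · ext x
    rw [mem_Hpart]
    constructor
    · rintro ⟨e, he, hc, hxe⟩
      rcases (hIs.1 e he).2 with ⟨hcc, -, -⟩ | ⟨-, h1, h2⟩
      · exact absurd hcc hc
      · rcases hxe with rfl | rfl
        exacts [h1, h2]
    · intro hxH
      obtain ⟨e, ⟨he, hxe⟩, -⟩ := hIs.2 x (Finset.mem_union_right _ hxH)
      rcases (hIs.1 e he).2 with ⟨hc, h1, h2⟩ | ⟨hr, -, -⟩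
      · exfalso
        have hxV : x ∈ V := by
          rcases hxe with rfl | rfl
          exacts [h1, h2]
        exact (Finset.disjoint_left.mp hdisj hxV) hxH
      · refine ⟨e, he, ?_, hxe⟩
        intro hc
        exact rlt_ne (hIs.1 e he).1 (Prod.ext hr hc)

end Bridge

open Classical in
/-- The Pfaffian of an `m × n` diagram equals the sum of the
signatures `sgn(V,H)` over all decompositions `(V,H)` of `C` with
`excess(H) = (0,…,0)` in `(ℤ/2ℤ)^m`. -/
theorem pfaffian_eq_sum_decompositions (m n : ℕ) (C : Diagram m n) :
    Pfaffian C =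
      ∑ VH ∈ (Finset.univ :
          Finset (Finset (Fin m × Fin n) × Finset (Fin m × Fin n))).filter
          (fun VH => IsDecomp C VH.1 VH.2 ∧ excess VH.2 = 0),
        sgnVH VH.1 VH.2 := by
  rw [Pfaffian]
  have hpart : (Finset.univ.filter (fun π => IsPM C π)) =
      ((Finset.univ :
          Finset (Finset (Fin m × Fin n) × Finset (Fin m × Fin n))).filter
          (fun VH => IsDecomp C VH.1 VH.2 ∧ excess VH.2 = 0)).biUnion
        (fun VH => Finset.univ.filter (fun π => IsVH VH.1 VH.2 π)) := by
    ext π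
    simp only [Finset.mem_filter, Finset.mem_biUnion, Finset.mem_univ, true_and]
    constructor
    · intro hpm
      exact ⟨(Vpart π, Hpart π), parts_decomp hpm, isPM_isVH hpm⟩
    · rintro ⟨VH, ⟨hdec, -⟩, hIs⟩
      exact (isVH_to_isPM hdec hIs).1
  rw [hpart, Finset.sum_biUnion]
  · apply Finset.sum_congr rfl
    intro VH hVH
    simp only [Finset.mem_filter, Finset.mem_univ, true_and] at hVH
    obtain ⟨⟨hdisj, hun, hcol⟩, hexc⟩ := hVH
    have hrow : ∀ i, Even ((VH.2.filter fun y => y.1 = i).card) := by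
      intro i
      rw [even_iff_cast_zero]
      exact congrFun hexc i
    exact Gsum_eq ((VH.1 ∪ VH.2).card) VH.1 VH.2 rfl hdisj hcol hrow
  · intro a ha b hb hne
    rw [Function.onFun, Finset.disjoint_left]
    intro π h1 h2
    simp only [Finset.mem_coe, Finset.mem_filter, Finset.mem_univ, true_and] at ha hb
    simp only [Finset.mem_filter, Finset.mem_univ, true_and] at h1 h2
    obtain ⟨-, v1, w1⟩ := isVH_to_isPM ha.1 h1
    obtain ⟨-, v2, w2⟩ := isVH_to_isPM hb.1 h2
    apply hne
    apply Prod.ext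
    · rw [← v1, ← v2]
    · rw [← w1, ← w2]
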